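/- Let T > 0, r, μ ∈ ℝ, σ ≠ 0 and γ > 0. Suppose Φ₁, …, Φ₇ : [0,T] → ℝ are continuously differentiable with Φ₁(t) ≠ 0 for all t, and, with Ψ̄(t) := −(σ²Φ₁(t))⁻¹·(μ−r)·(Φ₁(t) + Φ₂(t)Φ₆(t)² + (1/2)Φ₃(t)Φ₆(t)) and v̄(t) := −(σ²Φ₁(t))⁻¹·(μ−r)·(Φ₄(t) + Φ₆(t)Φ₂(t)Φ₇(t)), the following ODE system holds on [0,T]: Φ̇₁ + 2Φ₁(r + (μ−r)Ψ̄) + σ²Ψ̄²Φ₁ = 0; Φ̇₂ = 0; Φ̇₃ = 0; Φ̇₄ + v̄(μ−r)Φ₁ + Φ₄(r + (μ−r)Ψ̄) + σ²v̄Φ₁Ψ̄ = 0; Φ̇₅ + Φ₄(μ−r)v̄ + (1/2)σ²v̄²Φ₁ = 0; Φ̇₆ + Φ₆(r + (μ−r)Ψ̄) = 0; Φ̇₇ + Φ₆(μ−r)v̄ = 0; with terminal conditions Φ₁(T) = γ, Φ₂(T) = −γ, Φ₃(T) = 0, Φ₄(T) = −1, Φ₅(T) = 0, Φ₆(T) =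 1, Φ₇(T) = 0. Then for every t ∈ [0,T]: Φ₂(t) = −γ, Φ₃(t) = 0, Φ₁(t) = γ·Φ₆(t)², and consequently Ψ̄(t) = 0. -/

import Mathlib

/-- Section 5.1 (mean-variance model): for the Riccati-type ODE system of the
mean-variance problem one has `Φ₂ ≡ -γ`, `Φ₃ ≡ 0`, `Φ₁ ≡ γ Φ₆²`, and hence the
linear part `Ψ̄` of the equilibrium strategy vanishes. -/
theorem statement13 (T r μ σ γ : ℝ) (hT : 0 < T) (hσ : σ ≠ 0) (hγ : 0 < γ)
    (Φ₁ Φ₂ Φ₃ Φ₄ Φ₅ Φ₆ Φ₇ Φ₁' Φ₂' Φ₃' Φ₄' Φ₅' Φ₆' Φ₇' Ψ v : ℝ → ℝ)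
    (hne : ∀ t, Φ₁ t ≠ 0)
    (hc₁ : ContinuousOn Φ₁' (Set.Icc 0 T)) (hc₂ : ContinuousOn Φ₂' (Set.Icc 0 T))
    (hc₃ : ContinuousOn Φ₃' (Set.Icc 0 T)) (hc₄ : ContinuousOn Φ₄' (Set.Icc 0 T))
    (hc₅ : ContinuousOn Φ₅' (Set.Icc 0 T)) (hc₆ : ContinuousOn Φ₆' (Set.Icc 0 T))
    (hc₇ : ContinuousOn Φ₇' (Set.Icc 0 T))
    (hd₁ : ∀ t ∈ Set.Icc (0 : ℝ) T, HasDerivWithinAt Φ₁ (Φ₁' t) (Set.Icc (0 : ℝ) T) t)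
    (hd₂ : ∀ t ∈ Set.Icc (0 : ℝ) T, HasDerivWithinAt Φ₂ (Φ₂' t) (Set.Icc (0 : ℝ) T) t)
    (hd₃ : ∀ t ∈ Set.Icc (0 : ℝ) T, HasDerivWithinAt Φ₃ (Φ₃' t) (Set.Icc (0 : ℝ) T) t)
    (hd₄ : ∀ t ∈ Set.Icc (0 : ℝ) T, HasDerivWithinAt Φ₄ (Φ₄' t) (Set.Icc (0 : ℝ) T) t)
    (hd₅ : ∀ t ∈ Set.Icc (0 : ℝ) T, HasDerivWithinAt Φ₅ (Φ₅' t) (Set.Icc (0 : ℝ) T) t)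
    (hd₆ : ∀ t ∈ Set.Icc (0 : ℝ) T, HasDerivWithinAt Φ₆ (Φ₆' t) (Set.Icc (0 : ℝ) T) t)
    (hd₇ : ∀ t ∈ Set.Icc (0 : ℝ) T, HasDerivWithinAt Φ₇ (Φ₇' t) (Set.Icc (0 : ℝ) T) t)
    (hΨ : ∀ t, Ψ t = -(σ ^ 2 * Φ₁ t)⁻¹ * (μ - r)
      * (Φ₁ t + Φ₂ t * Φ₆ t ^ 2 + (1 / 2) * Φ₃ t * Φ₆ t))
    (hv : ∀ t, v t = -(σ ^ 2 * Φ₁ t)⁻¹ * (μ - r) * (Φ₄ t + Φ₆ t * Φ₂ t * Φ₇ t))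
    (he₁ : ∀ t ∈ Set.Icc (0 : ℝ) T,
      Φ₁' t + 2 * Φ₁ t * (r + (μ - r) * Ψ t) + σ ^ 2 * Ψ t ^ 2 * Φ₁ t = 0)
    (he₂ : ∀ t ∈ Set.Icc (0 : ℝ) T, Φ₂' t = 0)
    (he₃ : ∀ t ∈ Set.Icc (0 : ℝ) T, Φ₃' t = 0)
    (he₄ : ∀ t ∈ Set.Icc (0 : ℝ) T,
      Φ₄' t + v t * (μ - r) * Φ₁ t + Φ₄ t * (r + (μ - r) * Ψ t)
        + σ ^ 2 * v t * Φ₁ t * Ψ t = 0)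
    (he₅ : ∀ t ∈ Set.Icc (0 : ℝ) T,
      Φ₅' t + Φ₄ t * (μ - r) * v t + (1 / 2) * σ ^ 2 * v t ^ 2 * Φ₁ t = 0)
    (he₆ : ∀ t ∈ Set.Icc (0 : ℝ) T, Φ₆' t + Φ₆ t * (r + (μ - r) * Ψ t) = 0)
    (he₇ : ∀ t ∈ Set.Icc (0 : ℝ) T, Φ₇' t + Φ₆ t * (μ - r) * v t = 0)
    (hT₁ : Φ₁ T = γ) (hT₂ : Φ₂ T = -γ) (hT₃ : Φ₃ T = 0) (hT₄ : Φ₄ T = -1)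
    (hT₅ : Φ₅ T = 0) (hT₆ : Φ₆ T = 1) (hT₇ : Φ₇ T = 0) :
    ∀ t ∈ Set.Icc (0 : ℝ) T,
      Φ₂ t = -γ ∧ Φ₃ t = 0 ∧ Φ₁ t = γ * Φ₆ t ^ 2 ∧ Ψ t = 0 := by
  -- Φ₂ and Φ₃ are constant
  have hmemT : T ∈ Set.Icc (0:ℝ) T := ⟨hT.le, le_rfl⟩
  have hconst : ∀ (f f' : ℝ → ℝ),
      (∀ t ∈ Set.Icc (0:ℝ) T, HasDerivWithinAt f (f' t) (Set.Icc (0:ℝ) T) t) →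
      (∀ t ∈ Set.Icc (0:ℝ) T, f' t = 0) → ∀ x ∈ Set.Icc (0:ℝ) T, f x = f T := by
    intro f f' hd hz
    have hcont : ContinuousOn f (Set.Icc 0 T) := fun x hx => (hd x hx).continuousWithinAt
    have h0 : ∀ x ∈ Set.Icc (0:ℝ) T, f x = f 0 := by
      apply constant_of_has_deriv_right_zero hcont
      intro x hx
      have := (hd x ⟨hx.1, hx.2.le⟩).mono_of_mem_nhdsWithin (Icc_mem_nhdsGE_of_mem hx)
      rwa [hz x ⟨hx.1, hx.2.le⟩] at this
    intro x hx
    rw [h0 x hx, ← h0 T hmemT]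
  have hΦ₂ : ∀ t ∈ Set.Icc (0:ℝ) T, Φ₂ t = -γ := by
    intro t ht; rw [hconst Φ₂ Φ₂' hd₂ he₂ t ht, hT₂]
  have hΦ₃ : ∀ t ∈ Set.Icc (0:ℝ) T, Φ₃ t = 0 := by
    intro t ht; rw [hconst Φ₃ Φ₃' hd₃ he₃ t ht, hT₃]
  -- the difference W = Φ₁ - γ Φ₆²
  set W : ℝ → ℝ := fun t => Φ₁ t - γ * Φ₆ t ^ 2 with hWdef
  set W' : ℝ → ℝ := fun t => Φ₁' t - γ * (2 * Φ₆ t * Φ₆' t) with hW'def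
  have hdW : ∀ t ∈ Set.Icc (0:ℝ) T, HasDerivWithinAt W (W' t) (Set.Icc (0:ℝ) T) t := by
    intro t ht
    have h6 : HasDerivWithinAt (fun t => γ * Φ₆ t ^ 2)
        (γ * ((2:ℕ) * Φ₆ t ^ 1 * Φ₆' t)) (Set.Icc (0:ℝ) T) t :=
      ((hd₆ t ht).pow 2).const_mul γ
    have := (hd₁ t ht).sub h6
    refine this.congr_deriv ?_
    simp only [hW'def]; push_cast; ring
  -- key relation between Ψ and W
  have hσΦ : ∀ t, σ ^ 2 * Φ₁ t ≠ 0 := fun t => mul_ne_zero (pow_ne_zero 2 hσ) (hne t)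
  have hΨW : ∀ t ∈ Set.Icc (0:ℝ) T, σ ^ 2 * Φ₁ t * Ψ t = -(μ - r) * W t := by
    intro t ht
    rw [hΨ t, hΦ₂ t ht, hΦ₃ t ht]
    field_simp [hne t, hσ, hWdef]
    ring_nf
    simp only [hWdef]; ring
  -- W satisfies a linear ODE
  have hW' : ∀ t ∈ Set.Icc (0:ℝ) T, W' t = (-(2 * r) - (μ - r) * Ψ t) * W t := by
    intro t ht
    have h1 := he₁ t ht
    have h6 := he₆ t ht
    have h := hΨW t ht
    simp only [hWdef, hW'def]
    linear_combination h1 - 2 * γ * Φ₆ t * h6 - Ψ t * h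
  -- continuity of the coefficient
  have hΦ₁c : ContinuousOn Φ₁ (Set.Icc 0 T) := fun x hx => (hd₁ x hx).continuousWithinAt
  have hΦ₂c : ContinuousOn Φ₂ (Set.Icc 0 T) := fun x hx => (hd₂ x hx).continuousWithinAt
  have hΦ₃c : ContinuousOn Φ₃ (Set.Icc 0 T) := fun x hx => (hd₃ x hx).continuousWithinAt
  have hΦ₆c : ContinuousOn Φ₆ (Set.Icc 0 T) := fun x hx => (hd₆ x hx).continuousWithinAt
  have hΨc : ContinuousOn Ψ (Set.Icc 0 T) := by
    have : ContinuousOn (fun t => -(σ ^ 2 * Φ₁ t)⁻¹ * (μ - r)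
        * (Φ₁ t + Φ₂ t * Φ₆ t ^ 2 + (1 / 2) * Φ₃ t * Φ₆ t)) (Set.Icc 0 T) := by
      apply ContinuousOn.mul
      · exact (((continuousOn_const.mul hΦ₁c).inv₀ (fun x _ => hσΦ x)).neg).mul continuousOn_const
      · exact (hΦ₁c.add ((hΦ₂c.mul (hΦ₆c.pow 2)))).add ((continuousOn_const.mul hΦ₃c).mul hΦ₆c)
    exact this.congr fun x _ => hΨ x
  have hcc : ContinuousOn (fun t => -(2 * r) - (μ - r) * Ψ t) (Set.Icc 0 T) :=
    continuousOn_const.sub (continuousOn_const.mul hΨc)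
  obtain ⟨K, hK⟩ := isCompact_Icc.exists_bound_of_continuousOn hcc
  -- Gronwall for g s = W (T - s)
  set g : ℝ → ℝ := fun s => W (T - s) with hgdef
  have hmaps : ∀ s ∈ Set.Icc (0:ℝ) T, T - s ∈ Set.Icc (0:ℝ) T := by
    intro s hs; constructor <;> [linarith [hs.2]; linarith [hs.1]]
  have hgcont : ContinuousOn g (Set.Icc 0 T) := by
    have hWc : ContinuousOn W (Set.Icc 0 T) := fun x hx => (hdW x hx).continuousWithinAt
    exact hWc.comp (continuousOn_const.sub continuousOn_id) hmaps
  have hgd : ∀ s ∈ Set.Ico (0:ℝ) T, HasDerivWithinAt g (-W' (T - s)) (Set.Ici s) s := by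
    intro s hs
    have hs' : s ∈ Set.Icc (0:ℝ) T := ⟨hs.1, hs.2.le⟩
    have hl : HasDerivWithinAt (fun s : ℝ => T - s) (-1) (Set.Icc (0:ℝ) T) s :=
      ((hasDerivAt_const s T).sub (hasDerivAt_id s)).hasDerivWithinAt.congr_deriv (by ring)
    have := ((hdW (T - s) (hmaps s hs')).comp s hl hmaps)
    have h2 := this.mono_of_mem_nhdsWithin (Icc_mem_nhdsGE_of_mem hs)
    refine h2.congr_deriv ?_
    ring
  have hgbound : ∀ s ∈ Set.Ico (0:ℝ) T, ‖-W' (T - s)‖ ≤ |K| * ‖g s‖ + 0 := by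
    intro s hs
    have hs' : T - s ∈ Set.Icc (0:ℝ) T := hmaps s ⟨hs.1, hs.2.le⟩
    rw [hW' (T - s) hs']
    rw [norm_neg, Real.norm_eq_abs, abs_mul, add_zero]
    apply mul_le_mul_of_nonneg_right _ (abs_nonneg _)
    exact le_trans (hK (T - s) hs') (le_abs_self K)
  have hg0 : ‖g 0‖ ≤ 0 := by
    simp only [hgdef, hWdef, sub_zero, hT₁, hT₆]
    norm_num
  have hgz : ∀ s ∈ Set.Icc (0:ℝ) T, W (T - s) = 0 := by
    intro s hs
    have := norm_le_gronwallBound_of_norm_deriv_right_le hgcont hgd hg0 hgbound s hs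
    rw [gronwallBound_ε0] at this
    simp only [zero_mul] at this
    have : ‖g s‖ ≤ 0 := this
    simpa [hgdef] using le_antisymm this (norm_nonneg _)
  have hWz : ∀ t ∈ Set.Icc (0:ℝ) T, W t = 0 := by
    intro t ht
    have hs : T - t ∈ Set.Icc (0:ℝ) T := hmaps t ht
    have := hgz (T - t) hs
    simpa using this
  -- conclusion
  intro t ht
  refine ⟨hΦ₂ t ht, hΦ₃ t ht, ?_, ?_⟩
  · have := hWz t ht
    simp only [hWdef] at this
    linarith
  · have h := hΨW t ht
    rw [hWz t ht, mul_zero] at h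
    exact (mul_eq_zero.mp h).resolve_left (hσΦ t)
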